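/- Let ρ : ℤ → ℝ satisfy ρ₀ < 0, ρ_k > 0 for all k ≠ 0, and ρ₀ + ρ₂ < 0, and set λ* = √(−ρ₁(ρ₀ + ρ₂)) > 0. Then for all integers m ≤ 0 and n ≥ 2, the characteristic polynomial P_m^n(x) = det(xI − A_m^n) satisfies P_m^n(λ*) ≤ 0. -/

import Mathlib

open Matrix

/-- The tridiagonal matrix `A_m^n` indexed by `{m, …, n} ⊆ ℤ`, with
superdiagonal entries `(A)_{k,k+1} = ρ_{k+1}`, subdiagonal entries
`(A)_{k,k-1} = -ρ_{k-1}`, and zero diagonal. -/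
def triA (ρ : ℤ → ℝ) (m n : ℤ) :
    Matrix ↥(Finset.Icc m n) ↥(Finset.Icc m n) ℝ :=
  fun i j =>
    if (j : ℤ) = (i : ℤ) + 1 then ρ ((i : ℤ) + 1)
    else if (j : ℤ) = (i : ℤ) - 1 then -ρ ((i : ℤ) - 1)
    else 0

/-- The characteristic polynomial `P_m^n(x) = det(xI - A_m^n)`. -/
noncomputable def triP (ρ : ℤ → ℝ) (m n : ℤ) (x : ℝ) : ℝ :=
  (x • (1 : Matrix ↥(Finset.Icc m n) ↥(Finset.Icc m n) ℝ) - triA ρ m n).det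

def triT (a b c : ℕ → ℝ) : (N : ℕ) → Matrix (Fin N) (Fin N) ℝ :=
  fun _ i j =>
    if (i : ℕ) = (j : ℕ) then a i
    else if (j : ℕ) = (i : ℕ) + 1 then b i
    else if (i : ℕ) = (j : ℕ) + 1 then c j
    else 0

lemma triT_det_zero (a b c : ℕ → ℝ) : (triT a b c 0).det = 1 := by
  simp [Matrix.det_fin_zero]

lemma triT_det_one (a b c : ℕ → ℝ) : (triT a b c 1).det = a 0 := by
  simp [Matrix.det_fin_one, triT]

lemma v1 (N : ℕ) : ∀ j : Fin (N+1), (((1 : Fin (N+2)).succAbove j) : ℕ)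
    = if (j:ℕ) < 1 then (j:ℕ) else (j:ℕ)+1 := by
  intro j
  rcases Nat.lt_or_ge (j:ℕ) 1 with h | h
  · rw [if_pos h]
    rw [Fin.succAbove_of_castSucc_lt]
    · rfl
    · simp [Fin.lt_def, h]
  · rw [if_neg (by omega)]
    rw [Fin.succAbove_of_le_castSucc]
    · rfl
    · simp [Fin.le_def, h]

lemma triT_det_rec (a b c : ℕ → ℝ) (N : ℕ) :
    (triT a b c (N + 2)).det =
      a 0 * (triT (fun i => a (i+1)) (fun i => b (i+1)) (fun i => c (i+1)) (N+1)).det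
      - b 0 * c 0 * (triT (fun i => a (i+2)) (fun i => b (i+2)) (fun i => c (i+2)) N).det := by
  rw [show (N + 2) = (N+1).succ from rfl, Matrix.det_succ_row_zero]
  rw [Fin.sum_univ_succ, Fin.sum_univ_succ]
  have hz : ∀ j : Fin N, ((-1:ℝ)) ^ ((j.succ.succ : Fin (N+2)) : ℕ) *
      triT a b c (N+2) 0 j.succ.succ *
      ((triT a b c (N+2)).submatrix Fin.succ j.succ.succ.succAbove).det = 0 := by
    intro j
    have : triT a b c (N+2) 0 j.succ.succ = 0 := by
      simp [triT, Fin.val_succ]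
    rw [this]; ring
  rw [Finset.sum_congr rfl (fun j _ => hz j), Finset.sum_const_zero, add_zero]
  have h1 : (triT a b c (N+2)).submatrix Fin.succ ((0 : Fin (N+2)).succAbove)
      = triT (fun i => a (i+1)) (fun i => b (i+1)) (fun i => c (i+1)) (N+1) := by
    ext i j
    simp only [Matrix.submatrix_apply, Fin.succAbove_zero, triT, Fin.val_succ]
    split_ifs <;> first | rfl | omega
  have h2 : ((triT a b c (N+2)).submatrix Fin.succ ((0:Fin (N+1)).succ).succAbove).det
      = c 0 * (triT (fun i => a (i+2)) (fun i => b (i+2)) (fun i => c (i+2)) N).det := by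
    have e1 : ((0:Fin (N+1)).succ) = (1 : Fin (N+2)) := rfl
    rw [e1]
    set M' := (triT a b c (N+2)).submatrix Fin.succ (1 : Fin (N+2)).succAbove with hM'
    rw [show M'.det = _ from Matrix.det_succ_column_zero M']
    rw [Fin.sum_univ_succ]
    have hz2 : ∀ i : Fin N, ((-1:ℝ)) ^ ((i.succ : Fin (N+1)) : ℕ) * M' i.succ 0 *
        (M'.submatrix i.succ.succAbove Fin.succ).det = 0 := by
      intro i
      have : M' i.succ 0 = 0 := by
        simp [hM', triT, Fin.val_succ, v1]
      rw [this]; ring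
    rw [Finset.sum_congr rfl (fun i _ => hz2 i), Finset.sum_const_zero, add_zero]
    have hc : M' 0 0 = c 0 := by
      simp [hM', triT, v1]
    have h3 : M'.submatrix ((0:Fin (N+1)).succAbove) Fin.succ
        = triT (fun i => a (i+2)) (fun i => b (i+2)) (fun i => c (i+2)) N := by
      ext i j
      simp only [hM', Matrix.submatrix_apply, Fin.succAbove_zero, triT, Fin.val_succ, v1]
      split_ifs <;> first | rfl | omega
    rw [hc, h3]
    simp
  rw [h1, h2]
  simp [triT]
  ring

def icEquiv (m n : ℤ) : Fin ((n + 1 - m).toNat) ≃ ↥(Finset.Icc m n) where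
  toFun i := ⟨m + (i : ℕ), by
    have := i.isLt
    simp only [Finset.mem_Icc]
    omega⟩
  invFun z := ⟨(z.1 - m).toNat, by
    have := z.2
    simp only [Finset.mem_Icc] at this
    omega⟩
  left_inv i := by
    apply Fin.ext
    have := i.isLt
    simp
  right_inv z := by
    apply Subtype.ext
    have := z.2
    simp only [Finset.mem_Icc] at this
    simp
    omega

lemma triP_eq_triT (ρ : ℤ → ℝ) (m n : ℤ) (x : ℝ) :
    triP ρ m n x = (triT (fun _ => x) (fun k => -ρ (m + k + 1)) (fun k => ρ (m + k))
      ((n + 1 - m).toNat)).det := by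
  rw [triP, ← Matrix.det_submatrix_equiv_self (icEquiv m n)]
  congr 1
  ext i j
  have hi : ((icEquiv m n i : ℤ)) = m + (i : ℕ) := rfl
  have hj : ((icEquiv m n j : ℤ)) = m + (j : ℕ) := rfl
  have hij : (icEquiv m n i = icEquiv m n j) ↔ ((i : ℕ) = (j : ℕ)) := by
    rw [Subtype.ext_iff]
    show ((icEquiv m n i : ℤ)) = ((icEquiv m n j : ℤ)) ↔ _
    rw [hi, hj]
    omega
  simp only [Matrix.submatrix_apply, Matrix.sub_apply, Matrix.smul_apply, Matrix.one_apply,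
    triA, triT, hi, hj, smul_eq_mul]
  rcases eq_or_ne ((i:ℕ)) ((j:ℕ)) with hd | hd
  · rw [if_pos (hij.mpr hd), if_pos hd, if_neg (by omega), if_neg (by omega)]
    ring
  · rw [if_neg (fun h => hd (hij.mp h)), if_neg hd]
    rcases eq_or_ne ((j:ℕ)) ((i:ℕ)+1) with h1 | h1
    · rw [if_pos (by omega : (m + ((j:ℕ):ℤ)) = (m + ((i:ℕ):ℤ)) + 1), if_pos h1]
      ring
    · rw [if_neg (by omega : ¬ (m + ((j:ℕ):ℤ)) = (m + ((i:ℕ):ℤ)) + 1)]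
      rcases eq_or_ne ((i:ℕ)) ((j:ℕ)+1) with h2 | h2
      · rw [if_pos (by omega : (m + ((j:ℕ):ℤ)) = (m + ((i:ℕ):ℤ)) - 1), if_neg h1, if_pos h2]
        have : m + ((i:ℕ):ℤ) - 1 = m + ((j:ℕ):ℤ) := by omega
        rw [this]
        ring
      · rw [if_neg (by omega : ¬ (m + ((j:ℕ):ℤ)) = (m + ((i:ℕ):ℤ)) - 1), if_neg h1, if_neg h2]
        ring

section
variable (ρ : ℤ → ℝ) (x : ℝ)

lemma triT_apply (a b c : ℕ → ℝ) (N : ℕ) (i j : Fin N) : triT a b c N i j =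
    (if (i : ℕ) = (j : ℕ) then a i
    else if (j : ℕ) = (i : ℕ) + 1 then b i
    else if (i : ℕ) = (j : ℕ) + 1 then c j
    else 0) := rfl

lemma triT_congr {a b c a' b' c' : ℕ → ℝ} (N : ℕ) (ha : ∀ k, a k = a' k)
    (hb : ∀ k, b k = b' k) (hc : ∀ k, c k = c' k) :
    triT a b c N = triT a' b' c' N := by
  ext i j
  rw [triT_apply, triT_apply, ha, hb, hc]

lemma triT_det_rec' (a b c a' b' c' a'' b'' c'' : ℕ → ℝ) (N : ℕ)
    (ha : ∀ k, a' k = a (k+1)) (hb : ∀ k, b' k = b (k+1)) (hc : ∀ k, c' k = c (k+1))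
    (ha' : ∀ k, a'' k = a (k+2)) (hb' : ∀ k, b'' k = b (k+2)) (hc' : ∀ k, c'' k = c (k+2)) :
    (triT a b c (N + 2)).det =
      a 0 * (triT a' b' c' (N+1)).det - b 0 * c 0 * (triT a'' b'' c'' N).det := by
  rw [triT_det_rec, triT_congr (N+1) ha hb hc, triT_congr N ha' hb' hc']

lemma triP_empty {m n : ℤ} (h : n < m) : triP ρ m n x = 1 := by
  rw [triP_eq_triT, show (n + 1 - m).toNat = 0 by omega, triT_det_zero]

lemma triP_single (m : ℤ) : triP ρ m m x = x := by
  rw [triP_eq_triT, show (m + 1 - m).toNat = 1 by omega, triT_det_one]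

lemma triP_rec {m n : ℤ} (h : m < n) :
    triP ρ m n x = x * triP ρ (m+1) n x + ρ m * ρ (m+1) * triP ρ (m+2) n x := by
  obtain ⟨K, hK⟩ : ∃ K, (n + 1 - m).toNat = K + 2 := ⟨(n - m - 1).toNat, by omega⟩
  have e1 : ∀ t s : ℤ, t = s → ρ t = ρ s := fun _ _ h => by rw [h]
  have t1 := triP_eq_triT ρ (m+1) n x
  rw [show (n + 1 - (m+1)).toNat = K + 1 by omega] at t1
  have t2 := triP_eq_triT ρ (m+2) n x
  rw [show (n + 1 - (m+2)).toNat = K by omega] at t2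
  rw [triP_eq_triT, hK,
    triT_det_rec' (fun _ => x) (fun k => -ρ (m + k + 1)) (fun k => ρ (m + k))
      (fun _ => x) (fun k => -ρ (m + 1 + k + 1)) (fun k => ρ (m + 1 + k))
      (fun _ => x) (fun k => -ρ (m + 2 + k + 1)) (fun k => ρ (m + 2 + k)) K
      (fun k => rfl)
      (fun k => congrArg Neg.neg (e1 _ _ (by push_cast; ring)))
      (fun k => e1 _ _ (by push_cast; ring))
      (fun k => rfl)
      (fun k => congrArg Neg.neg (e1 _ _ (by push_cast; ring)))
      (fun k => e1 _ _ (by push_cast; ring)),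
    ← t1, ← t2]
  push_cast
  ring

lemma triP_rec' {m n : ℤ} (h : m < n) :
    triP ρ m n x = x * triP ρ m (n-1) x + ρ (n-1) * ρ n * triP ρ m (n-2) x := by
  obtain ⟨k, hk⟩ : ∃ k : ℕ, n - m = (k : ℤ) + 1 := ⟨(n - m - 1).toNat, by omega⟩
  clear h
  induction k using Nat.strong_induction_on generalizing m n with
  | _ k IH =>
    match k, hk with
    | 0, hk =>
      obtain rfl : n = m + 1 := by omega
      rw [triP_rec ρ x (by omega), triP_single, triP_empty ρ x (by omega),
        show m + 1 - 1 = m by ring, show m + 1 - 2 = m - 1 by ring,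
        triP_single, triP_empty ρ x (by omega)]
    | 1, hk =>
      obtain rfl : n = m + 2 := by omega
      have A : triP ρ (m+1) (m+2) x = x * x + ρ (m+1) * ρ (m+2) * 1 := by
        rw [triP_rec ρ x (show m + 1 < m + 2 by omega),
          show m + 1 + 1 = m + 2 by ring, show m + 1 + 2 = m + 3 by ring,
          triP_single, triP_empty ρ x (show (m+2:ℤ) < m + 3 by omega)]
      have B : triP ρ m (m+1) x = x * x + ρ m * ρ (m+1) * 1 := by
        rw [triP_rec ρ x (show m < m + 1 by omega),
          triP_single, triP_empty ρ x (show (m+1:ℤ) < m + 2 by omega)]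
      rw [show m + 2 - 1 = m + 1 by ring, show m + 2 - 2 = m by ring,
        triP_rec ρ x (show m < m + 2 by omega), A, B, triP_single ρ x (m+2),
        triP_single ρ x m]
      ring
    | (k+2), hk =>
      rw [triP_rec ρ x (show m < n by omega),
        IH (k+1) (by omega) (show n - (m+1) = ((k+1:ℕ):ℤ) + 1 by push_cast; omega),
        IH k (by omega) (show n - (m+2) = ((k:ℕ):ℤ) + 1 by push_cast; omega),
        triP_rec ρ x (show m < n - 1 by omega),
        triP_rec ρ x (show m < n - 2 by omega)]
      ring
end


/-- If `ρ₀ < 0`, `ρ_k > 0` for `k ≠ 0`, and `ρ₀ + ρ₂ < 0`, then with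
`λ* = √(-ρ₁(ρ₀ + ρ₂)) > 0` one has `P_m^n(λ*) ≤ 0` for all `m ≤ 0`, `n ≥ 2`. -/
theorem charpoly_nonpos_at_lambda_star
    (ρ : ℤ → ℝ) (h0 : ρ 0 < 0) (hk : ∀ k : ℤ, k ≠ 0 → 0 < ρ k)
    (h02 : ρ 0 + ρ 2 < 0) :
    0 < Real.sqrt (-(ρ 1) * (ρ 0 + ρ 2))
    ∧ ∀ m n : ℤ, m ≤ 0 → 2 ≤ n →
        triP ρ m n (Real.sqrt (-(ρ 1) * (ρ 0 + ρ 2))) ≤ 0 := by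
  have h1 := hk 1 one_ne_zero
  have h2 := hk 2 (by norm_num)
  have h3 := hk 3 (by norm_num)
  have hneg1 := hk (-1) (by norm_num)
  set L := Real.sqrt (-(ρ 1) * (ρ 0 + ρ 2)) with hLdef
  have hpos : (0:ℝ) < -(ρ 1) * (ρ 0 + ρ 2) := by nlinarith
  have hL : 0 < L := Real.sqrt_pos.mpr hpos
  have hL2 : L * L = -(ρ 1) * (ρ 0 + ρ 2) := Real.mul_self_sqrt hpos.le
  refine ⟨hL, ?_⟩
  -- small values
  have v01 : triP ρ 0 1 L = L * L + ρ 0 * ρ 1 := by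
    rw [triP_rec' ρ L (show (0:ℤ) < 1 by norm_num), show (1:ℤ)-1 = 0 by norm_num,
      show (1:ℤ)-2 = -1 by norm_num, triP_single, triP_empty ρ L (show (-1:ℤ) < 0 by norm_num)]
    ring
  have v02 : triP ρ 0 2 L = 0 := by
    rw [triP_rec' ρ L (show (0:ℤ) < 2 by norm_num), show (2:ℤ)-1 = 1 by norm_num,
      show (2:ℤ)-2 = 0 by norm_num, v01, triP_single]
    linear_combination L * hL2
  have v03 : triP ρ 0 3 L = -(ρ 2 * ρ 3 * ρ 1 * ρ 2) := by
    rw [triP_rec' ρ L (show (0:ℤ) < 3 by norm_num), show (3:ℤ)-1 = 2 by norm_num,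
      show (3:ℤ)-2 = 1 by norm_num, v02, v01]
    linear_combination (ρ 2 * ρ 3) * hL2
  have vm10 : triP ρ (-1) 0 L = L * L + ρ (-1) * ρ 0 := by
    rw [triP_rec' ρ L (show (-1:ℤ) < 0 by norm_num), show (0:ℤ)-1 = -1 by norm_num,
      show (0:ℤ)-2 = -2 by norm_num, triP_single, triP_empty ρ L (show (-2:ℤ) < -1 by norm_num)]
    ring
  have vm11 : triP ρ (-1) 1 L = L * (L * L + ρ (-1) * ρ 0) + ρ 0 * ρ 1 * L := by
    rw [triP_rec' ρ L (show (-1:ℤ) < 1 by norm_num), show (1:ℤ)-1 = 0 by norm_num,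
      show (1:ℤ)-2 = -1 by norm_num, vm10, triP_single]
  have vm12 : triP ρ (-1) 2 L = -(ρ (-1) * ρ 0 * ρ 0 * ρ 1) := by
    rw [triP_rec' ρ L (show (-1:ℤ) < 2 by norm_num), show (2:ℤ)-1 = 1 by norm_num,
      show (2:ℤ)-2 = 0 by norm_num, vm11, vm10]
    linear_combination (L * L + ρ (-1) * ρ 0) * hL2
  have hm11 : triP ρ (-1) 1 L ≤ 0 := by
    have e : triP ρ (-1) 1 L = L * (ρ (-1) * ρ 0 - ρ 1 * ρ 2) := by
      rw [vm11]; linear_combination L * hL2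
    rw [e]
    have h : ρ (-1) * ρ 0 - ρ 1 * ρ 2 < 0 := by nlinarith
    exact mul_nonpos_of_nonneg_of_nonpos hL.le h.le
  have hm12 : triP ρ (-1) 2 L ≤ 0 := by rw [vm12]; nlinarith [mul_nonneg (mul_nonneg hneg1.le (mul_self_nonneg (ρ 0))) h1.le]
  have h02' : triP ρ 0 2 L ≤ 0 := by rw [v02]
  have h03' : triP ρ 0 3 L ≤ 0 := by rw [v03]; nlinarith [mul_pos (mul_pos (mul_pos h2 h3) h1) h2]
  have hm13 : triP ρ (-1) 3 L ≤ 0 := by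
    rw [triP_rec' ρ L (show (-1:ℤ) < 3 by norm_num), show (3:ℤ)-1 = 2 by norm_num,
      show (3:ℤ)-2 = 1 by norm_num]
    have q1 : L * triP ρ (-1) 2 L ≤ 0 := mul_nonpos_of_nonneg_of_nonpos hL.le hm12
    have q2 : (ρ 2 * ρ 3) * triP ρ (-1) 1 L ≤ 0 :=
      mul_nonpos_of_nonneg_of_nonpos (mul_pos h2 h3).le hm11
    linarith
  -- step up in n
  have step : ∀ m n : ℤ, 2 ≤ n → triP ρ m n L ≤ 0 → triP ρ m (n+1) L ≤ 0 → m ≤ 0 →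
      triP ρ m (n+2) L ≤ 0 := by
    intro m n hn t1 t2 hm
    rw [triP_rec' ρ L (show m < n + 2 by omega), show n+2-1 = n+1 by ring,
      show n+2-2 = n by ring]
    have p1 : 0 < ρ (n+1) := hk _ (by omega)
    have p2 : 0 < ρ (n+2) := hk _ (by omega)
    have q1 : L * triP ρ m (n+1) L ≤ 0 := mul_nonpos_of_nonneg_of_nonpos hL.le t2
    have q2 : (ρ (n+1) * ρ (n+2)) * triP ρ m n L ≤ 0 :=
      mul_nonpos_of_nonneg_of_nonpos (mul_pos p1 p2).le t1
    linarith
  have main0 : ∀ n : ℤ, 2 ≤ n → triP ρ 0 n L ≤ 0 ∧ triP ρ 0 (n+1) L ≤ 0 := by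
    refine fun n => Int.le_induction (motive := fun n _ => triP ρ 0 n L ≤ 0 ∧ triP ρ 0 (n+1) L ≤ 0) (m := 2) ?_ ?_ n
    · refine ⟨h02', ?_⟩
      rw [show (2:ℤ)+1 = 3 by norm_num]
      exact h03'
    · intro n hn ih
      refine ⟨ih.2, ?_⟩
      have := step 0 n hn ih.1 ih.2 le_rfl
      rwa [show n+2 = n+1+1 by ring] at this
  have main1 : ∀ n : ℤ, 2 ≤ n → triP ρ (-1) n L ≤ 0 ∧ triP ρ (-1) (n+1) L ≤ 0 := by
    refine fun n => Int.le_induction (motive := fun n _ => triP ρ (-1) n L ≤ 0 ∧ triP ρ (-1) (n+1) L ≤ 0) (m := 2) ?_ ?_ n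
    · refine ⟨hm12, ?_⟩
      rw [show (2:ℤ)+1 = 3 by norm_num]
      exact hm13
    · intro n hn ih
      refine ⟨ih.2, ?_⟩
      have := step (-1) n hn ih.1 ih.2 (by norm_num)
      rwa [show n+2 = n+1+1 by ring] at this
  -- step down in m
  have stepdown : ∀ m n : ℤ, m ≤ -2 → triP ρ (m+1) n L ≤ 0 → triP ρ (m+2) n L ≤ 0 →
      2 ≤ n → triP ρ m n L ≤ 0 := by
    intro m n hm t1 t2 hn
    rw [triP_rec ρ L (show m < n by omega)]
    have p1 : 0 < ρ m := hk _ (by omega)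
    have p2 : 0 < ρ (m+1) := hk _ (by omega)
    have q1 : L * triP ρ (m+1) n L ≤ 0 := mul_nonpos_of_nonneg_of_nonpos hL.le t1
    have q2 : (ρ m * ρ (m+1)) * triP ρ (m+2) n L ≤ 0 :=
      mul_nonpos_of_nonneg_of_nonpos (mul_pos p1 p2).le t2
    linarith
  have down : ∀ j : ℕ, ∀ n : ℤ, 2 ≤ n →
      triP ρ (-(j:ℤ)) n L ≤ 0 ∧ triP ρ (-(j:ℤ)-1) n L ≤ 0 := by
    intro j
    induction j with
    | zero =>
      intro n hn
      constructor
      · rw [show (-((0:ℕ):ℤ)) = 0 by norm_num]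
        exact (main0 n hn).1
      · rw [show (-((0:ℕ):ℤ)) - 1 = -1 by norm_num]
        exact (main1 n hn).1
    | succ j ih =>
      intro n hn
      constructor
      · rw [show (-((j+1:ℕ):ℤ)) = -(j:ℤ)-1 by push_cast; ring]
        exact (ih n hn).2
      · rw [show (-((j+1:ℕ):ℤ)) - 1 = -(j:ℤ)-2 by push_cast; ring]
        apply stepdown _ n (by omega) _ _ hn
        · rw [show -(j:ℤ)-2+1 = -(j:ℤ)-1 by ring]
          exact (ih n hn).2
        · rw [show -(j:ℤ)-2+2 = -(j:ℤ) by ring]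
          exact (ih n hn).1
  intro m n hm hn
  obtain ⟨j, rfl⟩ : ∃ j : ℕ, m = -(j:ℤ) := ⟨(-m).toNat, by omega⟩
  exact (down j n hn).1
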